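/- Let q be a real number with q > 0 and q ≠ 1, let r ≥ 1 and d ≥ 0 be integers with r ≥ d. Define the real sequence b_k := (q−1)^{d−1} · (k·(k−1)⋯(k−d+1)) / [k+r−d] for k ≥ 0, with the convention b_k := 0 when k + r − d = 0 (note that the numerator k·(k−1)⋯(k−d+1) vanishes for k < d when d ≥ 1), and define T_n(x) := (q−1)^{−n} · Σ_{k=0}^{n} (−1)^{n−k} · binom(n,k) · b_k · q^{k·x}. Then for every integer n ≥ d and every integer N ≥ 1, Σ_{k=0}^{N−1} q^{r·k} · [k]^{n−d} = (q^{(r−d)·N} · T_n(N) − T_n(0)) / (n·(n−1)⋯(n−d+1)). -/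

import Mathlib

open Finset


lemma nat_key (d n k : ℕ) (hdk : d ≤ k) (hkn : k ≤ n) :
    k.descFactorial d * n.choose k = n.descFactorial d * (n - d).choose (k - d) := by
  rw [Nat.descFactorial_eq_factorial_mul_choose, Nat.descFactorial_eq_factorial_mul_choose,
    Nat.mul_assoc, Nat.mul_assoc, Nat.mul_comm (k.choose d), Nat.choose_mul hdk]

lemma key (d n : ℕ) (hdn : d ≤ n) (t : ℝ) :
    ∑ k ∈ range (n+1), (-1:ℝ)^(n-k) * (n.choose k : ℝ) * (∏ j ∈ range d, ((k:ℝ) - j)) * t^k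
    = (∏ j ∈ range d, ((n:ℝ) - j)) * (t^d * (t-1)^(n-d)) := by
  have hcast : ∀ m : ℕ, d ≤ m → (∏ j ∈ range d, ((m:ℝ) - j)) = (m.descFactorial d : ℝ) := by
    intro m hm
    rw [Nat.descFactorial_eq_prod_range, Nat.cast_prod]
    refine prod_congr rfl fun j hj => ?_
    rw [Nat.cast_sub ((mem_range.1 hj).le.trans hm)]
  have hsub : Finset.Ico d (n+1) ⊆ range (n+1) := by
    rw [range_eq_Ico]; exact Finset.Ico_subset_Ico (Nat.zero_le _) le_rfl
  rw [← Finset.sum_subset hsub (by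
    intro k hk hk2
    simp only [mem_range] at hk
    simp only [Finset.mem_Ico, not_and, not_lt] at hk2
    have hkd : k < d := by omega
    have : (∏ j ∈ range d, ((k:ℝ) - j)) = 0 := by
      apply prod_eq_zero (mem_range.2 hkd); simp
    simp [this])]
  rw [Finset.sum_Ico_eq_sum_range]
  have hM : n + 1 - d = (n - d) + 1 := by omega
  rw [hM]
  have binom : (t - 1)^(n-d) = ∑ i ∈ range (n - d + 1), t^i * (-1:ℝ)^(n-d-i) * ((n-d).choose i) := by
    rw [sub_eq_add_neg, add_pow]
  rw [binom, mul_sum, mul_sum]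
  refine sum_congr rfl fun i hi => ?_
  have hi' : i ≤ n - d := by simpa [Nat.lt_succ_iff] using hi
  have h1 : d + i ≤ n := by omega
  rw [hcast (d+i) (by omega), hcast n hdn]
  have hcast2 : ((d+i).descFactorial d : ℝ) * (n.choose (d+i) : ℝ)
      = (n.descFactorial d : ℝ) * ((n-d).choose i : ℝ) := by
    have hnat := nat_key d n (d+i) (by omega) h1
    rw [Nat.add_sub_cancel_left] at hnat
    exact_mod_cast hnat
  have hexp : n - (d + i) = n - d - i := by omega
  rw [hexp, pow_add]
  linear_combination ((-1:ℝ)^(n-d-i) * t^d * t^i) * hcast2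

/-- The q-bracket: `[x] = (q^x - 1)/(q - 1)`. -/
noncomputable def qb (q x : ℝ) : ℝ := (q ^ x - 1) / (q - 1)

theorem q_power_sum_closed_form_general (q : ℝ) (hq : 0 < q) (hq1 : q ≠ 1)
    (r d : ℕ) (hr : 1 ≤ r) (hdr : d ≤ r) (b : ℕ → ℝ)
    (hb : ∀ k : ℕ,
      b k = (q - 1) ^ ((d : ℤ) - 1) * (∏ j ∈ range d, ((k : ℝ) - j)) /
        qb q ((k + r - d : ℕ) : ℝ))
    (T : ℕ → ℝ → ℝ)
    (hT : ∀ n : ℕ, ∀ x : ℝ,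
      T n x = ((q - 1) ^ n)⁻¹ *
        ∑ k ∈ range (n + 1),
          (-1 : ℝ) ^ (n - k) * (n.choose k : ℝ) * b k * q ^ ((k : ℝ) * x)) :
    ∀ n N : ℕ, d ≤ n → 1 ≤ N →
      ∑ k ∈ range N, q ^ (r * k) * (qb q k) ^ (n - d)
        = (q ^ ((r - d) * N) * T n (N : ℝ) - T n 0) / ∏ j ∈ range d, ((n : ℝ) - j) := by
  intro n N hdn hN
  clear hN
  have hq1' : q - 1 ≠ 0 := sub_ne_zero.2 hq1
  have hP : (∏ j ∈ range d, ((n:ℝ) - j)) ≠ 0 := by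
    rw [Finset.prod_ne_zero_iff]
    intro j hj
    have : j < n := lt_of_lt_of_le (mem_range.1 hj) hdn
    have : (j : ℝ) < (n : ℝ) := by exact_mod_cast this
    exact sub_ne_zero.2 (ne_of_gt this)
  have hqpow : ∀ m : ℕ, 0 < m → q ^ m ≠ 1 := by
    intro m hm
    rcases hq1.lt_or_gt with h | h
    · exact ne_of_lt (pow_lt_one₀ hq.le h hm.ne')
    · exact ne_of_gt (one_lt_pow₀ h hm.ne')
  have hrpow : ∀ k M : ℕ, q ^ ((k:ℝ) * (M:ℝ)) = q ^ (k * M) := by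
    intro k M; rw [← Real.rpow_natCast q (k*M), Nat.cast_mul]
  have perk1 : ∀ k : ℕ, b k * (q ^ (k + r - d) - 1)
      = (q - 1)^d * ∏ j ∈ range d, ((k:ℝ) - j) := by
    intro k
    have hqb : qb q ((k+r-d : ℕ):ℝ) = (q ^ (k+r-d) - 1)/(q-1) := by
      rw [qb, Real.rpow_natCast]
    rcases Nat.eq_zero_or_pos (k + r - d) with h0 | hpos
    · have hk : k = 0 := by omega
      have hd : 0 < d := by omega
      have hprod : (∏ j ∈ range d, ((k:ℝ) - j)) = 0 :=
        prod_eq_zero (mem_range.2 hd) (by simp [hk])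
      rw [hb k, hprod, h0]
      simp
    · have hne : q ^ (k+r-d) - 1 ≠ 0 := sub_ne_zero.2 (hqpow _ hpos)
      rw [hb k, hqb]
      have hz : (q-1:ℝ)^((d:ℤ)-1) = (q-1)^d / (q-1) := by
        rw [zpow_sub_one₀ hq1', zpow_natCast, div_eq_mul_inv]
      rw [hz]
      field_simp
  have hsum : ∀ M : ℕ, q ^ ((r-d)*M) * T n (M:ℝ)
      = ((q - 1)^n)⁻¹ * ∑ k ∈ range (n+1),
          (-1:ℝ)^(n-k) * (n.choose k : ℝ) * b k * q ^ ((k+r-d)*M) := by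
    intro M
    rw [hT n]
    simp only [Finset.mul_sum]
    refine Finset.sum_congr rfl fun k _ => ?_
    rw [hrpow k M]
    have he : (k+r-d)*M = (r-d)*M + k*M := by
      have h : k + r - d = (r-d) + k := by omega
      rw [h]; ring
    rw [he, pow_add]
    ring
  have hdiff : ∀ M : ℕ, q ^ ((r-d)*(M+1)) * T n ((M+1 : ℕ):ℝ) - q ^ ((r-d)*M) * T n (M:ℝ)
      = (∏ j ∈ range d, ((n:ℝ) - j)) * (q ^ (r*M) * (qb q (M:ℝ))^(n-d)) := by
    intro M
    rw [hsum (M+1), hsum M, ← mul_sub, ← Finset.sum_sub_distrib]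
    have step : ∀ k ∈ range (n+1),
        (-1:ℝ)^(n-k) * (n.choose k : ℝ) * b k * q ^ ((k+r-d)*(M+1))
          - (-1:ℝ)^(n-k) * (n.choose k : ℝ) * b k * q ^ ((k+r-d)*M)
        = ((q-1)^d * q^((r-d)*M)) *
            ((-1:ℝ)^(n-k) * (n.choose k : ℝ) * (∏ j ∈ range d, ((k:ℝ) - j)) * (q^M)^k) := by
      intro k _
      have e1 : (k+r-d)*(M+1) = (k+r-d)*M + (k+r-d) := by ring
      have e2 : q ^ ((k+r-d)*M) = q^((r-d)*M) * (q^M)^k := by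
        rw [← pow_mul, ← pow_add]
        congr 1
        have h : k + r - d = (r-d) + k := by omega
        rw [h]; ring
      rw [e1, pow_add, e2]
      linear_combination ((-1:ℝ)^(n-k) * (n.choose k : ℝ) * (q^((r-d)*M) * (q^M)^k)) * perk1 k
    rw [Finset.sum_congr rfl step, ← Finset.mul_sum, key d n hdn (q^M)]
    have hqb : qb q (M:ℝ) = (q^M - 1)/(q-1) := by rw [qb, Real.rpow_natCast]
    have hsplit : (q-1:ℝ)^n = (q-1)^d * (q-1)^(n-d) := by
      rw [← pow_add]; congr 1; omega
    have hq2 : q^(r*M) = q^((r-d)*M) * (q^M)^d := by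
      rw [← pow_mul, ← pow_add]
      congr 1
      rw [Nat.mul_comm M d, ← Nat.add_mul]
      congr 1
      omega
    rw [hqb, div_pow, hsplit, hq2]
    field_simp
  induction N with
  | zero => simp
  | succ N ih =>
    rw [Finset.sum_range_succ, ih, div_add' _ _ _ hP]
    congr 1
    linear_combination -hdiff N
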